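/- arXiv:2509.16056 — 4 statements merged into one kernel-verified Lean document; each statement's English description precedes it below -/
import Mathlib

section
/- Let a commutative square in an abelian category with rows ∂ : A → B and ∂' : A' → B' and vertical maps f : A → A', g : B → B' be given. If g is an epimorphism and the square is cartesian (a pullback), then f induces an isomorphism ker ∂ ≅ ker ∂' and g induces an isomorphism coker ∂ ≅ coker ∂'. -/
open CategoryTheory CategoryTheory.Limits CategoryTheory.Abelian
open scoped Pseudoelement

/-- In an abelian category, given a commutative square with rows
`∂ : A ⟶ B`, `∂' : A' ⟶ B'` and vertical maps `f : A ⟶ A'`, `g : B ⟶ B'`,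
if `g` is an epimorphism and the square is cartesian (a pullback), then the induced
maps on kernels and cokernels are isomorphisms. -/
theorem stmt1 {C : Type*} [Category C] [Abelian C]
    {A B A' B' : C} (d : A ⟶ B) (d' : A' ⟶ B') (f : A ⟶ A') (g : B ⟶ B')
    [Epi g] (hpb : IsPullback d f g d') :
    IsIso (kernel.map d d' f g hpb.w) ∧ IsIso (cokernel.map d d' f g hpb.w) := by
  have hcomm : kernel.map d d' f g hpb.w ≫ kernel.ι d' = kernel.ι d ≫ f :=
    kernel.lift_ι _ _ _
  have hcomm' : cokernel.π d ≫ cokernel.map d d' f g hpb.w = g ≫ cokernel.π d' :=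
    cokernel.π_desc _ _ _
  constructor
  · -- kernel map
    have hmono : Mono (kernel.map d d' f g hpb.w) := by
      rw [Preadditive.mono_iff_cancel_zero]
      intro T t ht
      have h1 : (t ≫ kernel.ι d) ≫ d = (0 : T ⟶ A) ≫ d := by simp
      have h2 : (t ≫ kernel.ι d) ≫ f = (0 : T ⟶ A) ≫ f := by
        have := ht =≫ kernel.ι d'
        simp only [Category.assoc, hcomm, zero_comp] at this ⊢
        simpa using this
      have h3 : t ≫ kernel.ι d = 0 := hpb.hom_ext h1 h2
      exact zero_of_comp_mono (kernel.ι d) h3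
    have hepi : Epi (kernel.map d d' f g hpb.w) := by
      apply Pseudoelement.epi_of_pseudo_surjective
      intro y
      have h0 : Pseudoelement.pseudoApply g 0 = Pseudoelement.pseudoApply d' (Pseudoelement.pseudoApply (kernel.ι d') y) := by
        rw [Pseudoelement.apply_zero, ← Pseudoelement.comp_apply, kernel.condition,
          Pseudoelement.zero_apply]
      obtain ⟨s, hs1, hs2⟩ := Pseudoelement.pseudo_pullback h0
      set a : A := Pseudoelement.pseudoApply hpb.isoPullback.inv s with ha
      have hda : Pseudoelement.pseudoApply d a = 0 := by
        rw [ha, ← Pseudoelement.comp_apply, hpb.isoPullback_inv_fst, hs1]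
      have hfa : Pseudoelement.pseudoApply f a = Pseudoelement.pseudoApply (kernel.ι d') y := by
        rw [ha, ← Pseudoelement.comp_apply, hpb.isoPullback_inv_snd, hs2]
      obtain ⟨x, hx⟩ := Pseudoelement.pseudo_exact_of_exact
        (CategoryTheory.ShortComplex.exact_kernel d) a hda
      refine ⟨x, Pseudoelement.pseudo_injective_of_mono (kernel.ι d') ?_⟩
      rw [← Pseudoelement.comp_apply, hcomm, Pseudoelement.comp_apply, hx, hfa]
    exact isIso_of_mono_of_epi _
  · -- cokernel map
    have hepi : Epi (cokernel.map d d' f g hpb.w) := by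
      have : Epi (cokernel.π d ≫ cokernel.map d d' f g hpb.w) := by
        rw [hcomm']; exact epi_comp g (cokernel.π d')
      exact epi_of_epi (cokernel.π d) _
    have hmono : Mono (cokernel.map d d' f g hpb.w) := by
      apply Pseudoelement.mono_of_zero_of_map_zero
      intro x hx
      obtain ⟨b, hb⟩ := Pseudoelement.pseudo_surjective_of_epi (cokernel.π d) x
      have h1 : Pseudoelement.pseudoApply (cokernel.π d') (Pseudoelement.pseudoApply g b) = 0 := by
        rw [← Pseudoelement.comp_apply, ← hcomm', Pseudoelement.comp_apply, hb, hx]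
      obtain ⟨a', ha'⟩ := Pseudoelement.pseudo_exact_of_exact
        (CategoryTheory.ShortComplex.exact_cokernel d') _ h1
      obtain ⟨s, hs1, hs2⟩ := Pseudoelement.pseudo_pullback (p := b) (q := a') ha'.symm
      have hda : Pseudoelement.pseudoApply d (Pseudoelement.pseudoApply hpb.isoPullback.inv s) = b := by
        rw [← Pseudoelement.comp_apply, hpb.isoPullback_inv_fst, hs1]
      rw [← hb, ← hda, ← Pseudoelement.comp_apply, cokernel.condition,
        Pseudoelement.zero_apply]
    exact isIso_of_mono_of_epi _
end

section
/- Let F be a field, X = Spec A an affine F-scheme, S an F-scheme, and let 0 → F → ∏_{i∈V} F_i ⇉ ∏_{k∈E} F_k be an equalizer diagram of field extensions of F (indexed by vertices and edges of an oriented connected graph, with inclusions F_i ↪ F_k when k is adjacent to i). Then X(S) → ∏_i X(S_{F_i}) ⇉ ∏_k X(S_{F_k}) is an equalizer diagram of sets. -/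
open scoped TensorProduct

/-- Naturality of `Algebra.TensorProduct.comm` with respect to a map on the second factor. -/
private lemma comm_map_natural {F : Type*} [Field F] {B : Type*} [CommRing B] [Algebra F B]
    {K : Type*} {L : Type*} [CommRing K] [CommRing L] [Algebra F K] [Algebra F L]
    (σ : K →ₐ[F] L) (t : B ⊗[F] K) :
    Algebra.TensorProduct.comm F B L (Algebra.TensorProduct.map (AlgHom.id F B) σ t)
      = Algebra.TensorProduct.map σ (AlgHom.id F B)
          (Algebra.TensorProduct.comm F B K t) := by
  induction t using TensorProduct.induction_on with
  | zero => simp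
  | tmul b x => simp
  | add u v hu hv => simp only [map_add, hu, hv]

/-- The coordinates with respect to a base-changed basis transform covariantly along an
algebra map applied to the scalar (left) factor. -/
private lemma baseChange_repr_map {F : Type*} [Field F] {B : Type*} [CommRing B] [Algebra F B]
    {ι : Type*} (𝔅 : Module.Basis ι F B)
    {K L : Type*} [CommRing K] [CommRing L] [Algebra F K] [Algebra F L]
    (σ : K →ₐ[F] L) (t : K ⊗[F] B) (j : ι) :
    (𝔅.baseChange L).repr (Algebra.TensorProduct.map σ (AlgHom.id F B) t) j
      = σ ((𝔅.baseChange K).repr t j) := by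
  induction t using TensorProduct.induction_on with
  | zero => simp
  | tmul x b => simp
  | add u v hu hv => simp only [map_add, Finsupp.add_apply, hu, hv]

/-- Key descent lemma: a compatible family of elements of the `B ⊗[F] Fi i` comes from a
unique element of `B`. -/
private lemma key_descend (F : Type*) [Field F]
    (V E : Type*) [Nonempty V] (l r : E → V)
    (Fi : V → Type*) (Fk : E → Type*)
    [∀ i, Field (Fi i)] [∀ i, Algebra F (Fi i)]
    [∀ k, Field (Fk k)] [∀ k, Algebra F (Fk k)]
    (ιl : ∀ k, Fi (l k) →ₐ[F] Fk k) (ιr : ∀ k, Fi (r k) →ₐ[F] Fk k)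
    (heq : ∀ x : ∀ i, Fi i, (∀ k, ιl k (x (l k)) = ιr k (x (r k))) →
      ∃! a : F, ∀ i, algebraMap F (Fi i) a = x i)
    (B : Type*) [CommRing B] [Algebra F B]
    (y : ∀ i, B ⊗[F] Fi i)
    (hy : ∀ k, Algebra.TensorProduct.map (AlgHom.id F B) (ιl k) (y (l k)) =
               Algebra.TensorProduct.map (AlgHom.id F B) (ιr k) (y (r k))) :
    ∃! b : B, ∀ i, y i = b ⊗ₜ[F] 1 := by
  classical
  set 𝔅 := Module.Basis.ofVectorSpace F B with h𝔅
  let c : ∀ i, (Module.Basis.ofVectorSpaceIndex F B) →₀ Fi i :=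
    fun i => (𝔅.baseChange (Fi i)).repr (Algebra.TensorProduct.comm F B (Fi i) (y i))
  have compat : ∀ j k, ιl k (c (l k) j) = ιr k (c (r k) j) := by
    intro j k
    calc ιl k (c (l k) j)
        = (𝔅.baseChange (Fk k)).repr (Algebra.TensorProduct.map (ιl k) (AlgHom.id F B)
            (Algebra.TensorProduct.comm F B (Fi (l k)) (y (l k)))) j :=
          (baseChange_repr_map 𝔅 (ιl k) _ j).symm
      _ = (𝔅.baseChange (Fk k)).repr (Algebra.TensorProduct.comm F B (Fk k)
            (Algebra.TensorProduct.map (AlgHom.id F B) (ιl k) (y (l k)))) j := by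
          rw [comm_map_natural]
      _ = (𝔅.baseChange (Fk k)).repr (Algebra.TensorProduct.comm F B (Fk k)
            (Algebra.TensorProduct.map (AlgHom.id F B) (ιr k) (y (r k)))) j := by
          rw [hy k]
      _ = (𝔅.baseChange (Fk k)).repr (Algebra.TensorProduct.map (ιr k) (AlgHom.id F B)
            (Algebra.TensorProduct.comm F B (Fi (r k)) (y (r k)))) j := by
          rw [comm_map_natural]
      _ = ιr k (c (r k) j) := baseChange_repr_map 𝔅 (ιr k) _ j
  have hex : ∀ j, ∃! a : F, ∀ i, algebraMap F (Fi i) a = c i j :=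
    fun j => heq (fun i => c i j) (fun k => compat j k)
  choose a ha hu using hex
  let i0 : V := Classical.arbitrary V
  have hsupp : ∀ j, a j ≠ 0 → j ∈ (c i0).support := fun j hj =>
    Finsupp.mem_support_iff.mpr (fun h0 => hj ((algebraMap F (Fi i0)).injective
      (show algebraMap F (Fi i0) (a j) = algebraMap F (Fi i0) 0 by
        rw [ha j i0, h0, map_zero])))
  let aF : (Module.Basis.ofVectorSpaceIndex F B) →₀ F := Finsupp.onFinset (c i0).support a hsupp
  let b : B := 𝔅.repr.symm aF
  have hrb : 𝔅.repr b = aF := 𝔅.repr.apply_symm_apply aF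
  have hex2 : ∀ i, y i = b ⊗ₜ[F] (1 : Fi i) := by
    intro i
    have hγ : Algebra.TensorProduct.comm F B (Fi i) (y i)
        = Algebra.TensorProduct.comm F B (Fi i) (b ⊗ₜ[F] (1 : Fi i)) := by
      apply (𝔅.baseChange (Fi i)).repr.injective
      ext j
      have h1 : (𝔅.baseChange (Fi i)).repr
          (Algebra.TensorProduct.comm F B (Fi i) (b ⊗ₜ[F] (1 : Fi i))) j
          = algebraMap F (Fi i) (a j) := by
        rw [Algebra.TensorProduct.comm_tmul, Module.Basis.baseChange_repr_tmul, hrb]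
        show (aF j) • (1 : Fi i) = _
        rw [Algebra.algebraMap_eq_smul_one]
        rfl
      rw [h1]
      exact (ha j i).symm
    exact (Algebra.TensorProduct.comm F B (Fi i)).injective hγ
  refine ⟨b, hex2, ?_⟩
  intro b' hb'
  have h : b' ⊗ₜ[F] (1 : Fi i0) = b ⊗ₜ[F] (1 : Fi i0) := (hb' i0).symm.trans (hex2 i0)
  have h2 : ∀ j, 𝔅.repr b' j = 𝔅.repr b j := by
    intro j
    have h3 := congrArg (fun t => (𝔅.baseChange (Fi i0)).repr
      (Algebra.TensorProduct.comm F B (Fi i0) t) j) h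
    simp only [Algebra.TensorProduct.comm_tmul, Module.Basis.baseChange_repr_tmul] at h3
    exact (algebraMap F (Fi i0)).injective
      (by simpa [Algebra.algebraMap_eq_smul_one] using h3)
  exact 𝔅.repr.injective (Finsupp.ext h2)

/-- Let `F` be a field together with a factorization inverse system of
field extensions `F_i` (vertices `i ∈ V`) and `F_k` (edges `k ∈ E`, with head `l k` and
tail `r k`), such that `0 → F → ∏ᵢ F_i ⇉ ∏ₖ F_k` is an equalizer diagram.  For an
affine `F`-scheme `X = Spec A` and an `F`-scheme `S` (with coordinate ring
`B = Γ(S, O_S)`, so that `X(S_{F_i}) = Hom_{F-alg}(A, B ⊗_F F_i)`), the diagram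
`X(S) → ∏ᵢ X(S_{F_i}) ⇉ ∏ₖ X(S_{F_k})` is an equalizer of sets: every compatible
family of points over the `F_i` descends uniquely to an `F`-point. -/
theorem stmt9 (F : Type*) [Field F]
    (V E : Type*) [Nonempty V] (l r : E → V)
    (Fi : V → Type*) (Fk : E → Type*)
    [∀ i, Field (Fi i)] [∀ i, Algebra F (Fi i)]
    [∀ k, Field (Fk k)] [∀ k, Algebra F (Fk k)]
    (ιl : ∀ k, Fi (l k) →ₐ[F] Fk k) (ιr : ∀ k, Fi (r k) →ₐ[F] Fk k)
    (heq : ∀ x : ∀ i, Fi i, (∀ k, ιl k (x (l k)) = ιr k (x (r k))) →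
      ∃! a : F, ∀ i, algebraMap F (Fi i) a = x i)
    (A B : Type*) [CommRing A] [Algebra F A] [CommRing B] [Algebra F B]
    (ψ : ∀ i, A →ₐ[F] (B ⊗[F] Fi i))
    (hψ : ∀ k, (Algebra.TensorProduct.map (AlgHom.id F B) (ιl k)).comp (ψ (l k)) =
               (Algebra.TensorProduct.map (AlgHom.id F B) (ιr k)).comp (ψ (r k))) :
    ∃! φ : A →ₐ[F] B, ∀ i,
      (Algebra.TensorProduct.includeLeft :
        B →ₐ[F] (B ⊗[F] Fi i)).comp φ = ψ i := by
  classical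
  have hkey : ∀ a : A, ∃! b : B, ∀ i, ψ i a = b ⊗ₜ[F] 1 := by
    intro a
    have h := key_descend F V E l r Fi Fk ιl ιr heq B (fun i => ψ i a)
      (fun k => AlgHom.congr_fun (hψ k) a)
    simpa using h
  choose f hf hf' using hkey
  refine ⟨{ toFun := f
            map_one' := (hf' 1 1 (fun i => by
              simp [Algebra.TensorProduct.one_def])).symm
            map_mul' := fun x z => (hf' (x * z) (f x * f z) (fun i => by
              rw [map_mul, hf x i, hf z i, Algebra.TensorProduct.tmul_mul_tmul, one_mul])).symm
            map_zero' := (hf' 0 0 (fun i => by simp)).symm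
            map_add' := fun x z => (hf' (x + z) (f x + f z) (fun i => by
              rw [map_add, hf x i, hf z i, TensorProduct.add_tmul])).symm
            commutes' := fun cc => (hf' (algebraMap F A cc) (algebraMap F B cc) (fun i => by
              rw [AlgHom.commutes, Algebra.TensorProduct.algebraMap_apply])).symm },
      ?_, ?_⟩
  · intro i
    ext a
    exact (hf a i).symm
  · intro φ' hφ'
    ext a
    exact hf' a (φ' a) (fun i => by rw [← hφ' i]; rfl)
end

section
/- Let Γ be a group acting on groups G and H equivariantly for a crossed module structure ∂ : G → H. In the group C⁰ of 0-cochains (α, h) with α : Γ → G and h ∈ H under the twisted product (α,h)(β,h') = ((h·β)α, hh'), the set Z⁰ of pairs satisfying α(st) = α(s)·(s·α(t)) and ∂(α(s))·(s·h) = h for all s, t ∈ Γ is a subgroup, and the map g ↦ ((s ↦ g (s·g)⁻¹), ∂(g)) is a group homomorphism G → C⁰ whose image is a normal subgroup of Z⁰, via the identity (α,h)(δg, ∂g) = (δ(h·g), ∂(h·g))(α,h). -/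
variable {G H Γ : Type*} [Group G] [Group H] [Group Γ]

/-- The twisted product on 0-cochains `(α, h)`:
`(α, h)(β, h') = (s ↦ (h · β s) * α s, h * h')`. -/
def cmMul (a : H →* MulAut G) (x y : (Γ → G) × H) : (Γ → G) × H :=
  (fun s => a x.2 (y.1 s) * x.1 s, x.2 * y.2)

/-- The identity 0-cochain. -/
def cmOne : (Γ → G) × H := (fun _ => 1, 1)

/-- The inverse of a 0-cochain. -/
def cmInv (a : H →* MulAut G) (x : (Γ → G) × H) : (Γ → G) × H :=
  (fun s => a x.2⁻¹ (x.1 s)⁻¹, x.2⁻¹)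

section

variable [MulDistribMulAction Γ G] [MulDistribMulAction Γ H]

/-- The 0-cocycle condition: `α (s t) = α s * (s • α t)` and `∂(α s) * (s • h) = h`. -/
def IsZeroCocycle (δ : G →* H) (x : (Γ → G) × H) : Prop :=
  (∀ s t : Γ, x.1 (s * t) = x.1 s * (s • x.1 t)) ∧
  (∀ s : Γ, δ (x.1 s) * (s • x.2) = x.2)

/-- The coboundary of `g`: `(s ↦ g * (s • g)⁻¹, ∂ g)`. -/
def cmCoboundary (δ : G →* H) (g : G) : (Γ → G) × H :=
  (fun s => g * (s • g)⁻¹, δ g)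

/-- The 0-cocycles form a subgroup of the group of 0-cochains, and
`g ↦ (δg, ∂g)` is a homomorphism `G → C⁰` whose image is a normal subgroup of `Z⁰`,
via the identity `(α, h)(δg, ∂g) = (δ(h·g), ∂(h·g))(α, h)`. -/
theorem stmt13 (δ : G →* H) (a : H →* MulAut G)
    (pf1 : ∀ g g' : G, g * g' * g⁻¹ = a (δ g) g')
    (pf2 : ∀ (h : H) (g : G), δ (a h g) = h * δ g * h⁻¹)
    (equivδ : ∀ (s : Γ) (g : G), δ (s • g) = s • (δ g))
    (equivA : ∀ (s : Γ) (h : H) (g : G), s • (a h g) = a (s • h) (s • g)) :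
    -- `Z⁰` is a subgroup of `C⁰`
    (IsZeroCocycle δ (cmOne : (Γ → G) × H)) ∧
    (∀ x y : (Γ → G) × H, IsZeroCocycle δ x → IsZeroCocycle δ y →
      IsZeroCocycle δ (cmMul a x y)) ∧
    (∀ x : (Γ → G) × H, IsZeroCocycle δ x → IsZeroCocycle δ (cmInv a x)) ∧
    -- `g ↦ (δg, ∂g)` is a homomorphism landing in `Z⁰`
    (∀ g : G, IsZeroCocycle δ (cmCoboundary δ g : (Γ → G) × H)) ∧
    (∀ g g' : G, cmMul a (cmCoboundary δ g) (cmCoboundary δ g')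
        = (cmCoboundary δ (g * g') : (Γ → G) × H)) ∧
    -- its image is normal in `Z⁰`: `(α,h)(δg, ∂g) = (δ(h·g), ∂(h·g))(α,h)`
    (∀ x : (Γ → G) × H, IsZeroCocycle δ x → ∀ g : G,
      cmMul a x (cmCoboundary δ g) = cmMul a (cmCoboundary δ (a x.2 g)) x) := by

  -- key conjugation identity from the cocycle condition
  have key : ∀ x : (Γ → G) × H, IsZeroCocycle δ x → ∀ (s : Γ) (z : G),
      a x.2 z = x.1 s * a (s • x.2) z * (x.1 s)⁻¹ := by
    intro x hx s z
    conv_lhs => rw [← hx.2 s]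
    rw [map_mul, MulAut.mul_apply, ← pf1]
  have key2 : ∀ x : (Γ → G) × H, IsZeroCocycle δ x → ∀ (s : Γ) (z : G),
      a (s • x.2) z = (x.1 s)⁻¹ * a x.2 z * x.1 s := by
    intro x hx s z
    conv_rhs => rw [key x hx s z]
    group
  refine ⟨⟨?_, ?_⟩, ?_, ?_, ?_, ?_, ?_⟩
  · intro s t; simp [cmOne]
  · intro s; simp [cmOne]
  · rintro x y ⟨hx1, hx2⟩ ⟨hy1, hy2⟩
    constructor
    · intro s t
      simp only [cmMul, hy1, hx1, map_mul, smul_mul', equivA, key2 x ⟨hx1, hx2⟩]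
      group
    · intro s
      have ex : s • x.2 = (δ (x.1 s))⁻¹ * x.2 := eq_inv_mul_iff_mul_eq.mpr (hx2 s)
      have ey : s • y.2 = (δ (y.1 s))⁻¹ * y.2 := eq_inv_mul_iff_mul_eq.mpr (hy2 s)
      simp only [cmMul, map_mul, pf2, smul_mul', ex, ey]
      group
  · rintro x ⟨hx1, hx2⟩
    have e1 : ∀ s : Γ, s • x.2 = (δ (x.1 s))⁻¹ * x.2 :=
      fun s => eq_inv_mul_iff_mul_eq.mpr (hx2 s)
    constructor
    · intro s t
      have hs : s • x.2⁻¹ = x.2⁻¹ * δ (x.1 s) := by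
        rw [smul_inv', e1 s]; group
      simp only [cmInv]
      rw [hx1, equivA, hs, smul_inv', map_mul a, MulAut.mul_apply, ← pf1]
      simp only [mul_inv_rev, map_mul, map_inv]
      group
    · intro s
      simp only [cmInv]
      rw [pf2, map_inv δ, smul_inv', e1 s]
      group
  · intro g
    constructor
    · intro s t
      simp only [cmCoboundary, mul_smul, smul_mul', smul_inv']
      group
    · intro s
      simp only [cmCoboundary, map_mul, map_inv, equivδ]
      group
  · intro g g'
    refine Prod.ext (funext fun s => ?_) (map_mul δ g g').symm
    show a (δ g) (g' * (s • g')⁻¹) * (g * (s • g)⁻¹) = g * g' * (s • (g * g'))⁻¹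
    rw [← pf1, smul_mul', mul_inv_rev]
    group
  · rintro x ⟨hx1, hx2⟩ g
    refine Prod.ext (funext fun s => ?_) ?_
    · show a x.2 (g * (s • g)⁻¹) * x.1 s
          = a (δ (a x.2 g)) (x.1 s) * (a x.2 g * (s • (a x.2 g))⁻¹)
      rw [← pf1, equivA, key2 x ⟨hx1, hx2⟩, map_mul (a x.2), map_inv (a x.2)]
      group
    · show x.2 * δ g = δ (a x.2 g) * x.2
      rw [pf2]; group
end
end

section
/- Let T be an algebraic torus over a field F with flasque resolution 1 → S → Q → T → 1 (S flasque, Q quasitrivial, so H¹(E, Q) = 0 for all field extensions E/F). Then the connecting map δ : T(F) → H¹(F, S) is surjective, and two points t₀, t₁ ∈ T(F) satisfy δ(t₀) = δ(t₁) if and only if t₁ = t₀ · j(q) for some q ∈ Q(F), where j : Q(F) → T(F) is the induced map. Consequently T(F)/R ≅ H¹(F, S), where the subgroup of elements R-equivalent to 1 equals the image of Q(F). -/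
/-- Let `1 → S → Q → T → 1` be a short exact sequence of
`Γ`-modules (written additively; `Γ` the Galois group), where `H¹(Γ, Q) = 0` (every
1-cocycle valued in `Q` is a coboundary; this holds when `Q` is quasitrivial).  Then
the connecting map `δ : T^Γ → H¹(Γ, S)` is (defined and) surjective, and two fixed
points `t₀, t₁ ∈ T^Γ` have `δ t₀ = δ t₁` iff `t₁ = t₀ + π q` for some `Γ`-fixed
`q ∈ Q^Γ` (the image of `Q(F)`).  Consequently `T(F)/im Q(F) ≅ H¹(F, S)`. -/
theorem stmt17 {Γ S Q T : Type*} [Group Γ]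
    [AddCommGroup S] [AddCommGroup Q] [AddCommGroup T]
    [DistribMulAction Γ S] [DistribMulAction Γ Q] [DistribMulAction Γ T]
    (i : S →+ Q) (π : Q →+ T)
    (hi_eq : ∀ (s : Γ) (x : S), i (s • x) = s • i x)
    (hπ_eq : ∀ (s : Γ) (q : Q), π (s • q) = s • π q)
    (hi : Function.Injective i) (hπ : Function.Surjective π)
    (hexact : ∀ q : Q, π q = 0 ↔ ∃ x : S, i x = q)
    (hQ : ∀ c : Γ → Q, (∀ s t : Γ, c (s * t) = c s + s • c t) →
      ∃ x : Q, ∀ s : Γ, c s = s • x - x) :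
    -- δ is defined on fixed points: every `t ∈ T^Γ` is represented by a 1-cocycle in `S`
    (∀ t : T, (∀ s : Γ, s • t = t) →
      ∃ c : Γ → S, (∀ s u : Γ, c (s * u) = c s + s • c u) ∧
        ∃ q : Q, π q = t ∧ ∀ s : Γ, i (c s) = s • q - q) ∧
    -- δ is surjective onto `H¹(Γ, S)`
    (∀ c : Γ → S, (∀ s u : Γ, c (s * u) = c s + s • c u) →
      ∃ (t : T) (q : Q), (∀ s : Γ, s • t = t) ∧ π q = t ∧
        ∀ s : Γ, i (c s) = s • q - q) ∧
    -- `δ t₀ = δ t₁` iff `t₁ = t₀ + π q` for some fixed `q ∈ Q^Γ`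
    (∀ (t₀ t₁ : T) (c₀ c₁ : Γ → S) (q₀ q₁ : Q),
      (∀ s : Γ, s • t₀ = t₀) → (∀ s : Γ, s • t₁ = t₁) →
      π q₀ = t₀ → (∀ s : Γ, i (c₀ s) = s • q₀ - q₀) →
      π q₁ = t₁ → (∀ s : Γ, i (c₁ s) = s • q₁ - q₁) →
      ((∃ x : S, ∀ s : Γ, c₁ s - c₀ s = s • x - x) ↔
        ∃ q : Q, (∀ s : Γ, s • q = q) ∧ t₁ = t₀ + π q)) := by
  refine ⟨?_, ?_, ?_⟩
  · intro t ht
    obtain ⟨q, hq⟩ := hπ t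
    have hker : ∀ s : Γ, ∃ x : S, i x = s • q - q := by
      intro s
      exact (hexact _).mp (by rw [map_sub, hπ_eq, hq, ht s, sub_self])
    choose c hc using hker
    refine ⟨c, ?_, q, hq, hc⟩
    intro s u
    apply hi
    rw [map_add, hi_eq, hc, hc, hc, smul_sub, mul_smul]
    abel
  · intro c hc
    obtain ⟨x, hx⟩ := hQ (fun s => i (c s)) (by
      intro s t; show i (c (s * t)) = i (c s) + s • i (c t); rw [hc, map_add, hi_eq])
    refine ⟨π x, x, ?_, rfl, hx⟩
    intro s
    have : π (i (c s)) = 0 := (hexact _).mpr ⟨c s, rfl⟩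
    have h2 := congrArg π (hx s)
    rw [this, map_sub, hπ_eq] at h2
    exact (sub_eq_zero.mp h2.symm)
  · intro t₀ t₁ c₀ c₁ q₀ q₁ ht₀ ht₁ hq₀ hc₀ hq₁ hc₁
    constructor
    · rintro ⟨x, hx⟩
      refine ⟨q₁ - q₀ - i x, ?_, ?_⟩
      · intro s
        have h : i (c₁ s - c₀ s) = i (s • x - x) := by rw [hx]
        rw [map_sub, map_sub, hi_eq, hc₀, hc₁] at h
        have h2 : s • (q₁ - q₀ - i x) - (q₁ - q₀ - i x) = 0 := by
          rw [smul_sub, smul_sub]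
          have := sub_eq_zero.mpr h
          rw [sub_sub_sub_comm] at this ⊢
          rw [← this]; abel
        exact sub_eq_zero.mp h2
      · have : π (i x) = 0 := (hexact _).mpr ⟨x, rfl⟩
        rw [map_sub, map_sub, this, hq₀, hq₁]
        abel
    · rintro ⟨q, hqf, hq⟩
      have hker : π (q₁ - q₀ - q) = 0 := by
        rw [map_sub, map_sub, hq₀, hq₁, hq]; abel
      obtain ⟨x, hx⟩ := (hexact _).mp hker
      refine ⟨x, fun s => ?_⟩
      apply hi
      rw [map_sub, map_sub, hi_eq, hc₀, hc₁, hx, smul_sub, smul_sub, hqf s]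
      abel
end
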